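/- Let Â be a nonzero m×m real matrix, B̂ a nonzero m×n real matrix, H > 0, μ > 0, ν > 0. Let ζ : ℝ → ℝⁿ be measurable with ‖ζ(t)‖ ≤ H for all t, let 0 ≤ t_K ≤ T₀ ≤ T, and set ε(T₀) = ∫_{t_K}^{T₀} exp(Â(T₀ − τ)) B̂ ζ(τ) dτ. If ‖ε(T₀)‖² ≥ μ e^{−νT}, then T₀ − t_K ≥ 2μ‖Â‖ e^{−(4‖Â‖+ν)T} / (‖B̂‖² H²). (This lower bound on the time needed for the sampling error to reach the triggering level excludes Zeno behavior.) -/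

import Mathlib

open Matrix
open scoped Matrix.Norms.L2Operator

lemma my_norm_exp_le {𝔸 : Type*} [NormedRing 𝔸] [NormOneClass 𝔸] [NormedAlgebra ℝ 𝔸]
    [CompleteSpace 𝔸] (x : 𝔸) : ‖NormedSpace.exp x‖ ≤ Real.exp ‖x‖ := by
  rw [Real.exp_eq_exp_ℝ, NormedSpace.exp_eq_tsum ℝ, NormedSpace.exp_eq_tsum ℝ]
  refine (norm_tsum_le_tsum_norm (NormedSpace.norm_expSeries_summable' x)).trans ?_
  refine Summable.tsum_le_tsum (fun n => ?_) (NormedSpace.norm_expSeries_summable' x) ?_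
  · rw [norm_smul, norm_inv, smul_eq_mul, Real.norm_natCast]
    exact mul_le_mul_of_nonneg_left (norm_pow_le x n) (by positivity)
  · simpa using NormedSpace.norm_expSeries_summable' (𝕂 := ℝ) (‖x‖ : ℝ)

/-- Exclusion of Zeno behavior: if the sampling error
`ε(T₀) = ∫_{t_K}^{T₀} exp(Â(T₀ − τ)) B̂ ζ(τ) dτ` (with `‖ζ(t)‖ ≤ H`) has reached the
triggering level, `‖ε(T₀)‖² ≥ μ e^{−νT}`, then the elapsed time satisfies
`T₀ − t_K ≥ 2μ‖Â‖ e^{−(4‖Â‖+ν)T} / (‖B̂‖² H²)`.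
Matrix norms are the spectral (`ℓ²→ℓ²` operator) norms, vector norms Euclidean. -/
theorem inter_event_time_lower_bound (m n : ℕ)
    (Ahat : Matrix (Fin m) (Fin m) ℝ) (hA : Ahat ≠ 0)
    (Bhat : Matrix (Fin m) (Fin n) ℝ) (hB : Bhat ≠ 0)
    (H μ ν : ℝ) (hH : 0 < H) (hμ : 0 < μ) (hν : 0 < ν)
    (ζ : ℝ → Fin n → ℝ) (hζmeas : Measurable ζ)
    (hζ : ∀ t, Real.sqrt (∑ i, ζ t i ^ 2) ≤ H)
    (tK T₀ T : ℝ) (h0 : 0 ≤ tK) (h1 : tK ≤ T₀) (h2 : T₀ ≤ T)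
    (ε : Fin m → ℝ)
    (hε : ε = ∫ τ in tK..T₀, (NormedSpace.exp ((T₀ - τ) • Ahat)) *ᵥ (Bhat *ᵥ ζ τ))
    (htrig : μ * Real.exp (-ν * T) ≤ ∑ i, ε i ^ 2) :
    2 * μ * ‖Ahat‖ * Real.exp (-(4 * ‖Ahat‖ + ν) * T) / (‖Bhat‖ ^ 2 * H ^ 2) ≤ T₀ - tK := by
  classical
  have hm : 0 < m := by
    rcases Nat.eq_zero_or_pos m with h | h
    · exfalso; subst h
      exact hA (Subsingleton.elim _ _)
    · exact h
  haveI : Nonempty (Fin m) := ⟨⟨0, hm⟩⟩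
  haveI : Nontrivial (Matrix (Fin m) (Fin m) ℝ) :=
    inferInstanceAs (Nontrivial (Fin m → Fin m → ℝ))
  haveI : NormOneClass (Matrix (Fin m) (Fin m) ℝ) := ⟨CStarRing.norm_one⟩
  have ha0 : 0 < ‖Ahat‖ := norm_pos_iff.mpr hA
  have hb0 : 0 < ‖Bhat‖ := norm_pos_iff.mpr hB
  have hT0 : 0 ≤ T := le_trans (le_trans h0 h1) h2
  set a : ℝ := ‖Ahat‖ with ha
  set b : ℝ := ‖Bhat‖ with hb
  set Δ : ℝ := T₀ - tK with hΔdef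
  have hΔ0 : 0 ≤ Δ := by simp [hΔdef]; linarith
  -- Euclidean view of ε
  set L : (Fin m → ℝ) ≃L[ℝ] EuclideanSpace ℝ (Fin m) :=
    (EuclideanSpace.equiv (Fin m) ℝ).symm with hL
  set v : EuclideanSpace ℝ (Fin m) := L ε with hv
  have hvnorm : ∑ i, ε i ^ 2 = ‖v‖ ^ 2 := by
    rw [EuclideanSpace.norm_eq, Real.sq_sqrt (by positivity)]
    refine Finset.sum_congr rfl fun i _ => ?_
    simp only [Real.norm_eq_abs, sq_abs]
    rfl
  -- commute integral
  set C : ℝ := Real.exp (a * T) * (b * H) with hC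
  have hC0 : 0 ≤ C := by positivity
  have hvle : ‖v‖ ≤ C * Δ := by
    have hveq : v = ∫ τ in tK..T₀,
        L ((NormedSpace.exp ((T₀ - τ) • Ahat)) *ᵥ (Bhat *ᵥ ζ τ)) := by
      rw [hv, hε]
      simp only [intervalIntegral]
      rw [map_sub, L.integral_comp_comm, L.integral_comp_comm]
    have hbound : ∀ τ ∈ Set.uIoc tK T₀,
        ‖L ((NormedSpace.exp ((T₀ - τ) • Ahat)) *ᵥ (Bhat *ᵥ ζ τ))‖ ≤ C := by
      intro τ hτ
      rw [Set.uIoc_of_le h1] at hτ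
      have hτ1 : tK < τ := hτ.1
      have hτ2 : τ ≤ T₀ := hτ.2
      have step1 : ‖L ((NormedSpace.exp ((T₀ - τ) • Ahat)) *ᵥ (Bhat *ᵥ ζ τ))‖ ≤
          ‖NormedSpace.exp ((T₀ - τ) • Ahat)‖ *
            ‖(EuclideanSpace.equiv (Fin m) ℝ).symm (Bhat *ᵥ ζ τ)‖ :=
        Matrix.l2_opNorm_mulVec _ ((EuclideanSpace.equiv (Fin m) ℝ).symm (Bhat *ᵥ ζ τ))
      have step2 : ‖(EuclideanSpace.equiv (Fin m) ℝ).symm (Bhat *ᵥ ζ τ)‖ ≤ b * H := by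
        refine le_trans (Matrix.l2_opNorm_mulVec Bhat
          ((EuclideanSpace.equiv (Fin n) ℝ).symm (ζ τ))) ?_
        have : ‖(EuclideanSpace.equiv (Fin n) ℝ).symm (ζ τ)‖ ≤ H := by
          rw [EuclideanSpace.norm_eq]
          refine le_trans (le_of_eq ?_) (hζ τ)
          congr 1
          refine Finset.sum_congr rfl fun i _ => ?_
          simp [Real.norm_eq_abs, sq_abs]
        exact mul_le_mul_of_nonneg_left this (norm_nonneg _)
      have step3 : ‖NormedSpace.exp ((T₀ - τ) • Ahat)‖ ≤ Real.exp (a * T) := by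
        refine le_trans (my_norm_exp_le _) (Real.exp_le_exp.mpr ?_)
        rw [norm_smul, Real.norm_eq_abs, abs_of_nonneg (by linarith)]
        have h1' : T₀ - τ ≤ T := by linarith
        have h2' : 0 ≤ T₀ - τ := by linarith
        nlinarith
      calc ‖L ((NormedSpace.exp ((T₀ - τ) • Ahat)) *ᵥ (Bhat *ᵥ ζ τ))‖
          ≤ ‖NormedSpace.exp ((T₀ - τ) • Ahat)‖ *
              ‖(EuclideanSpace.equiv (Fin m) ℝ).symm (Bhat *ᵥ ζ τ)‖ := step1
        _ ≤ Real.exp (a * T) * (b * H) := by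
            apply mul_le_mul step3 step2 (norm_nonneg _) (Real.exp_nonneg _)
        _ = C := rfl
    calc ‖v‖ = ‖∫ τ in tK..T₀,
        L ((NormedSpace.exp ((T₀ - τ) • Ahat)) *ᵥ (Bhat *ᵥ ζ τ))‖ := by rw [hveq]
      _ ≤ C * |T₀ - tK| := intervalIntegral.norm_integral_le_of_norm_le_const hbound
      _ = C * Δ := by rw [abs_of_nonneg]; linarith
  -- arithmetic
  have key : μ * Real.exp (-ν * T) ≤ C ^ 2 * Δ ^ 2 := by
    calc μ * Real.exp (-ν * T) ≤ ∑ i, ε i ^ 2 := htrig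
      _ = ‖v‖ ^ 2 := hvnorm
      _ ≤ (C * Δ) ^ 2 := by
          apply pow_le_pow_left₀ (norm_nonneg _) hvle
      _ = C ^ 2 * Δ ^ 2 := by ring
  rw [div_le_iff₀ (by positivity)]
  have e1 : Real.exp (-(4 * a + ν) * T) = Real.exp (-(4 * a) * T) * Real.exp (-ν * T) := by
    rw [← Real.exp_add]; ring_nf
  have e2 : C ^ 2 = Real.exp (2 * a * T) * (b * H) ^ 2 := by
    rw [hC, mul_pow, sq (Real.exp (a*T)), ← Real.exp_add]
    ring_nf
  have e3 : Real.exp (-(4 * a) * T) * Real.exp (2 * a * T) = Real.exp (-(2 * a * T)) := by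
    rw [← Real.exp_add]; ring_nf
  have e4 : 2 * a * Δ ≤ Real.exp (2 * a * T) := by
    have := Real.add_one_le_exp (2 * a * T)
    nlinarith
  have e5 : Real.exp (-(2 * a * T)) * Real.exp (2 * a * T) = 1 := by
    rw [← Real.exp_add]; simp
  have hkey2 : 2 * μ * a * (Real.exp (-(4 * a) * T) * Real.exp (-ν * T)) ≤
      2 * a * Δ * Real.exp (-(2 * a * T)) * ((b * H) ^ 2 * Δ) := by
    have h := mul_le_mul_of_nonneg_left key
      (show (0:ℝ) ≤ 2 * a * Real.exp (-(4 * a) * T) by positivity)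
    calc 2 * μ * a * (Real.exp (-(4 * a) * T) * Real.exp (-ν * T))
        = 2 * a * Real.exp (-(4 * a) * T) * (μ * Real.exp (-ν * T)) := by ring
      _ ≤ 2 * a * Real.exp (-(4 * a) * T) * (C ^ 2 * Δ ^ 2) := h
      _ = 2 * a * Δ * (Real.exp (-(4 * a) * T) * Real.exp (2 * a * T)) * ((b * H) ^ 2 * Δ) := by
          rw [e2]; ring
      _ = 2 * a * Δ * Real.exp (-(2 * a * T)) * ((b * H) ^ 2 * Δ) := by rw [e3]
  have hfin : 2 * a * Δ * Real.exp (-(2 * a * T)) ≤ 1 := by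
    calc 2 * a * Δ * Real.exp (-(2 * a * T))
        ≤ Real.exp (2 * a * T) * Real.exp (-(2 * a * T)) := by
          apply mul_le_mul_of_nonneg_right e4 (Real.exp_nonneg _)
      _ = 1 := by rw [mul_comm]; exact e5
  calc 2 * μ * a * Real.exp (-(4 * a + ν) * T)
      = 2 * μ * a * (Real.exp (-(4 * a) * T) * Real.exp (-ν * T)) := by rw [e1]
    _ ≤ 2 * a * Δ * Real.exp (-(2 * a * T)) * ((b * H) ^ 2 * Δ) := hkey2
    _ ≤ 1 * ((b * H) ^ 2 * Δ) := by
        apply mul_le_mul_of_nonneg_right hfin (by positivity)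
    _ = Δ * (b ^ 2 * H ^ 2) := by ring
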